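/- Let a_j = √((j + 1/2)(j + 1)) for j ∈ ℕ and φ(n) = ∑_{j=0}^{n} 1/a_j. There exist constants 0 < c ≤ C such that for all integers n, m ≥ 1: c · |log n - log m| ≤ |φ(n) - φ(m)| ≤ C · |log n - log m|. (Thus the spectral metric of the cyclic pair given by the scaling operator and the Gaussian is equivalent to the metric induced on ℕ* ⊂ ℝ₊* by the invariant metric of the Lie group ℝ₊*.) -/

import Mathlib

open Finset

/-- `φ(n) = ∑_{j=0}^{n} 1/a_j` with `a_j = √((j+1/2)(j+1))`. -/
noncomputable def phi (n : ℕ) : ℝ :=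
  ∑ j ∈ Finset.range (n + 1), 1 / Real.sqrt (((j : ℝ) + 1 / 2) * ((j : ℝ) + 1))

/-- Pointwise comparison of one term of `φ` with one logarithmic increment. -/
lemma key_bounds (x : ℝ) (hx : 1 ≤ x) :
    (1/4) * (Real.log (x+1) - Real.log x) ≤ 1 / Real.sqrt ((x + 3/2) * (x + 2)) ∧
    1 / Real.sqrt ((x + 3/2) * (x + 2)) ≤ Real.log (x+1) - Real.log x := by
  have hx0 : 0 < x := by linarith
  have hP : (0:ℝ) < (x + 3/2) * (x + 2) := by nlinarith
  have hs_lb : x + 3/2 ≤ Real.sqrt ((x + 3/2) * (x + 2)) := by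
    have : Real.sqrt ((x + 3/2)^2) ≤ Real.sqrt ((x + 3/2) * (x + 2)) := by
      apply Real.sqrt_le_sqrt; nlinarith
    rwa [Real.sqrt_sq (by linarith)] at this
  have hs_ub : Real.sqrt ((x + 3/2) * (x + 2)) ≤ x + 2 := by
    have : Real.sqrt ((x + 3/2) * (x + 2)) ≤ Real.sqrt ((x + 2)^2) := by
      apply Real.sqrt_le_sqrt; nlinarith
    rwa [Real.sqrt_sq (by linarith)] at this
  have hspos : 0 < Real.sqrt ((x + 3/2) * (x + 2)) := Real.sqrt_pos.mpr hP
  have hlog_eq : Real.log (x+1) - Real.log x = Real.log ((x+1)/x) := by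
    rw [Real.log_div (by linarith) (by linarith)]
  -- upper bound on log increment : ≤ 1/x
  have hlog_ub : Real.log (x+1) - Real.log x ≤ 1 / x := by
    rw [hlog_eq]
    have := Real.log_le_sub_one_of_pos (show (0:ℝ) < (x+1)/x by positivity)
    have h1 : (x+1)/x - 1 = 1/x := by field_simp; ring
    linarith [h1 ▸ this]
  -- lower bound on log increment : ≥ 1/(x+1)
  have hlog_lb : 1 / (x+1) ≤ Real.log (x+1) - Real.log x := by
    rw [hlog_eq]
    have h2 := Real.log_le_sub_one_of_pos (show (0:ℝ) < x/(x+1) by positivity)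
    have h3 : Real.log (x/(x+1)) = - Real.log ((x+1)/x) := by
      rw [← Real.log_inv]; congr 1; field_simp
    have h4 : x/(x+1) - 1 = - (1/(x+1)) := by field_simp; ring
    rw [h3, h4] at h2
    linarith
  constructor
  · -- (1/4) * logdiff ≤ 1/(4x) ≤ 1/(x+2) ≤ 1/sqrt
    have h5 : 1 / (x + 2) ≤ 1 / Real.sqrt ((x + 3/2) * (x + 2)) :=
      one_div_le_one_div_of_le hspos hs_ub
    have h6 : (1/4) * (1/x) ≤ 1 / (x + 2) := by
      rw [show (1/4) * (1/x) = 1/(4*x) by ring]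
      exact one_div_le_one_div_of_le (by linarith) (by linarith)
    calc (1/4) * (Real.log (x+1) - Real.log x) ≤ (1/4) * (1/x) := by linarith
      _ ≤ 1 / (x + 2) := h6
      _ ≤ _ := h5
  · have h7 : 1 / Real.sqrt ((x + 3/2) * (x + 2)) ≤ 1 / (x + 3/2) :=
      one_div_le_one_div_of_le (by linarith) hs_lb
    have h8 : 1 / (x + 3/2) ≤ 1 / (x + 1) :=
      one_div_le_one_div_of_le (by linarith) (by linarith)
    linarith

/-- Two-sided bound for `φ(n) - φ(m)` when `1 ≤ m ≤ n`. -/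
lemma phi_diff_bounds (m : ℕ) (hm : 1 ≤ m) :
    ∀ n : ℕ, m ≤ n →
      (1/4) * (Real.log n - Real.log m) ≤ phi n - phi m ∧
      phi n - phi m ≤ Real.log n - Real.log m := by
  intro n hn
  induction n, hn using Nat.le_induction with
  | base => simp
  | succ n hn ih =>
    have hn1 : (1:ℝ) ≤ (n:ℝ) := by
      exact_mod_cast le_trans hm hn
    have hkey := key_bounds (n : ℝ) hn1
    have hstep : phi (n+1) - phi n = 1 / Real.sqrt (((n:ℝ) + 3/2) * ((n:ℝ) + 2)) := by
      unfold phi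
      rw [Finset.sum_range_succ]
      have e1 : (((n+1:ℕ)):ℝ) + 1/2 = (n:ℝ) + 3/2 := by push_cast; ring
      have e2 : (((n+1:ℕ)):ℝ) + 1 = (n:ℝ) + 2 := by push_cast; ring
      rw [e1, e2]; ring
    have hcast : Real.log ((n:ℕ)+1 : ℕ) = Real.log ((n:ℝ)+1) := by push_cast; ring_nf
    constructor
    · rw [hcast]
      have := hkey.1
      linarith [ih.1]
    · rw [hcast]
      have := hkey.2
      linarith [ih.2]

/-- the distance `|φ(n) - φ(m)|` is equivalent to the logarithmic
distance on `ℕ* ⊂ ℝ₊*`. -/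
theorem stmt10 :
    ∃ c C : ℝ, 0 < c ∧ c ≤ C ∧
      ∀ n m : ℕ, 1 ≤ n → 1 ≤ m →
        c * |Real.log n - Real.log m| ≤ |phi n - phi m|
        ∧ |phi n - phi m| ≤ C * |Real.log n - Real.log m| := by
  refine ⟨1/4, 1, by norm_num, by norm_num, ?_⟩
  have main : ∀ n m : ℕ, 1 ≤ m → m ≤ n →
      (1/4) * |Real.log n - Real.log m| ≤ |phi n - phi m| ∧
      |phi n - phi m| ≤ 1 * |Real.log n - Real.log m| := by
    intro n m hm hmn
    obtain ⟨h1, h2⟩ := phi_diff_bounds m hm n hmn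
    have hlog : 0 ≤ Real.log n - Real.log m := by
      have : Real.log m ≤ Real.log n := by
        apply Real.log_le_log (by exact_mod_cast hm) (by exact_mod_cast hmn)
      linarith
    have hphi : 0 ≤ phi n - phi m := by linarith
    rw [abs_of_nonneg hlog, abs_of_nonneg hphi]
    constructor <;> linarith
  intro n m hn hm
  rcases le_total m n with h | h
  · exact main n m hm h
  · have := main m n hn h
    rw [abs_sub_comm (Real.log m), abs_sub_comm (phi m)] at this
    exact this
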